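/- Let Φ: ℝ → (0,1) be strictly increasing with Φ(t) = 1 − Φ(−t) for all t, and let w ∈ ℝ^n with pairwise comparison matrix M_{ij} = Φ(w_i − w_j) for i ≠ j. Define scores τ_i = (1/(n−1))Σ_{j≠i} Φ(w_i − w_j). Then for any items i, k: w_i > w_k if and only if τ_i > τ_k. In particular, the ordering of items by score coincides with the ordering by parameter. -/

import Mathlib

theorem stmt14 (n : ℕ) (hn : 2 ≤ n) (Φ : ℝ → ℝ)
    (hrange : ∀ t : ℝ, Φ t ∈ Set.Ioo (0:ℝ) 1)
    (hmono : StrictMono Φ)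
    (hsym : ∀ t : ℝ, Φ t = 1 - Φ (-t))
    (w : Fin n → ℝ) :
    ∀ i j : Fin n,
      w j < w i ↔
        (1 / ((n : ℝ) - 1)) * ∑ l ∈ Finset.univ.erase j, Φ (w j - w l)
          < (1 / ((n : ℝ) - 1)) * ∑ l ∈ Finset.univ.erase i, Φ (w i - w l) := by
  have h2 : (2:ℝ) ≤ (n:ℝ) := by exact_mod_cast hn
  have hc : (0:ℝ) < 1 / ((n:ℝ) - 1) := by
    apply div_pos one_pos; linarith
  have hnpos : 0 < n := by omega
  haveI : NeZero n := ⟨by omega⟩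
  set f : ℝ → ℝ := fun x => ∑ l : Fin n, Φ (x - w l) with hf
  have hfmono : StrictMono f := by
    intro a b hab
    apply Finset.sum_lt_sum_of_nonempty Finset.univ_nonempty
    intro l _
    exact hmono (by linarith)
  intro i j
  have herase : ∀ k : Fin n, ∑ l ∈ Finset.univ.erase k, Φ (w k - w l) = f (w k) - Φ 0 := by
    intro k
    rw [Finset.sum_erase_eq_sub (Finset.mem_univ k)]
    simp [hf]
  rw [herase i, herase j, mul_lt_mul_iff_right₀ hc]
  constructor
  · intro h; have := hfmono h; linarith
  · intro h
    have : f (w j) < f (w i) := by linarith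
    exact hfmono.lt_iff_lt.mp this
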